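/- arXiv:1502.03005 — 13 statements merged into one kernel-verified Lean document; each statement's English description precedes it below -/
import Mathlib

section
/- A contract (A, (G_I, G_T)) is realizable if and only if there exists a state s such that G_I(s) holds and s is viable, i.e. ∃ s, G_I(s) ∧ Viable(s). (Theorem 1, Alternative realizability) -/
/-- Reachability with respect to assumptions: least predicate closed under
    initial states and assumption-respecting transitions. -/
inductive Reachable {state input : Type*} (I : state → Prop)
    (T : state → input → state → Prop) (A : state → input → Prop) : state → Prop
  | init (s : state) : I s → Reachable I T A s
  | step (s_prev : state) (i : input) (s : state) :
      Reachable I T A s_prev → A s_prev i → T s_prev i s → Reachable I T A s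

/-- A transition system (I, T) is a realization of the contract (A, (GI, GT)). -/
def Realization {state input : Type*} (I : state → Prop)
    (T : state → input → state → Prop) (A : state → input → Prop)
    (GI : state → Prop) (GT : state → input → state → Prop) : Prop :=
  (∀ s, I s → GI s) ∧
  (∀ s i s', Reachable I T A s ∧ A s i ∧ T s i s' → GT s i s') ∧
  (∃ s, I s) ∧
  (∀ s i, Reachable I T A s ∧ A s i → ∃ s', T s i s')

/-- A contract is realizable if some transition system realizes it. -/
def Realizable {state input : Type*} (A : state → input → Prop)
    (GI : state → Prop) (GT : state → input → state → Prop) : Prop :=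
  ∃ I T, Realization I T A GI GT

/-- Viability: the greatest predicate V with
    V s ↔ ∀ i, A s i → ∃ s', GT s i s' ∧ V s'.
    Characterized via Knaster–Tarski as the union of all post-fixed points. -/
def Viable {state input : Type*} (A : state → input → Prop)
    (GT : state → input → state → Prop) (s : state) : Prop :=
  ∃ V : state → Prop, V s ∧ (∀ x, V x → ∀ i, A x i → ∃ s', GT x i s' ∧ V s')

/-- Finite viability: GT can keep responding to valid inputs for n steps. -/
def ViableN {state input : Type*} (A : state → input → Prop)
    (GT : state → input → state → Prop) : ℕ → state → Prop
  | 0, _ => True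
  | n + 1, s => ∀ i, A s i → ∃ s', GT s i s' ∧ ViableN A GT n s'

/-- One-step extendability after n steps. -/
def ExtendN {state input : Type*} (A : state → input → Prop)
    (GT : state → input → state → Prop) : ℕ → state → Prop
  | 0, s => ∀ i, A s i → ∃ s', GT s i s'
  | n + 1, s => ∀ i s₁, A s i ∧ GT s i s₁ → ExtendN A GT n s₁

/-- BaseCheck(n): some initial-guarantee state is viable for n steps. -/
def BaseCheck {state input : Type*} (A : state → input → Prop)
    (GI : state → Prop) (GT : state → input → state → Prop) (n : ℕ) : Prop :=
  ∃ s, GI s ∧ ViableN A GT n s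

/-- ExtendCheck(n): every state is extendable after n steps. -/
def ExtendCheck {state input : Type*} (A : state → input → Prop)
    (GT : state → input → state → Prop) (n : ℕ) : Prop :=
  ∀ s, ExtendN A GT n s

/-- Simplified base check BaseCheck'(n). -/
def BaseCheck' {state input : Type*} (A : state → input → Prop)
    (GI : state → Prop) (GT : state → input → state → Prop) (n : ℕ) : Prop :=
  ∀ s, GI s → ExtendN A GT n s

/-- Theorem 1 (Alternative realizability): a contract (A, (GI, GT)) is
    realizable iff there is a state satisfying GI which is viable. -/
theorem alternative_realizability {state input : Type*}
    (A : state → input → Prop) (GI : state → Prop)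
    (GT : state → input → state → Prop) :
    Realizable A GI GT ↔ ∃ s, GI s ∧ Viable A GT s := by
  constructor
  · rintro ⟨I, T, h1, h2, ⟨s0, hs0⟩, h4⟩
    refine ⟨s0, h1 s0 hs0, Reachable I T A, Reachable.init s0 hs0, ?_⟩
    intro x hx i hAi
    obtain ⟨s', hT⟩ := h4 x i ⟨hx, hAi⟩
    exact ⟨s', h2 x i s' ⟨hx, hAi, hT⟩, Reachable.step x i s' hx hAi hT⟩
  · rintro ⟨s0, hGI, V, hV0, hV⟩
    refine ⟨(· = s0), fun s i s' => GT s i s' ∧ V s', ?_, ?_, ⟨s0, rfl⟩, ?_⟩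
    · rintro s rfl; exact hGI
    · rintro s i s' ⟨_, _, hGT, _⟩; exact hGT
    · rintro s i ⟨hr, hAi⟩
      have hVs : V s := by
        induction hr with
        | init s h => exact h ▸ hV0
        | step sp i s _ _ hT ih => exact hT.2
      obtain ⟨s', hGT, hVs'⟩ := hV s hVs i hAi
      exact ⟨s', hGT, hVs'⟩
end

section
/- If a transition system (I, T) is a realization of the contract (A, (G_I, G_T)), then every state reachable with respect to the assumption A is viable: ∀ s, Reachable_A(s) → Viable(s). (Key lemma for the 'only if' direction of Theorem 1) -/
/-- Key lemma for the 'only if' direction of Theorem 1: in any realization,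
    every state reachable with respect to the assumptions is viable. -/
theorem reachable_viable {state input : Type*}
    (I : state → Prop) (T : state → input → state → Prop)
    (A : state → input → Prop) (GI : state → Prop)
    (GT : state → input → state → Prop)
    (h : Realization I T A GI GT) :
    ∀ s, Reachable I T A s → Viable A GT s := by
  intro s hs
  exact ⟨Reachable I T A, hs, fun x hx i hAi => by
    obtain ⟨s', hT⟩ := h.2.2.2 x i ⟨hx, hAi⟩
    exact ⟨s', h.2.1 x i s' ⟨hx, hAi, hT⟩, Reachable.step x i s' hx hAi hT⟩⟩
end

section
/- Let (A, (G_I, G_T)) be a contract and suppose s₀ is a state with G_I(s₀) and Viable(s₀). Then the transition system (I, T) defined by I(s) := (s = s₀) and T(s, i, s') := G_T(s, i, s') ∧ Viable(s') is a realization of the contract (A, (G_I, G_T)). (Construction for the 'if' direction of Theorem 1) -/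
/-- Construction for the 'if' direction of Theorem 1: if GI s₀ and Viable s₀,
    then (I, T) with I s := (s = s₀) and T s i s' := GT s i s' ∧ Viable s'
    is a realization of the contract. -/
theorem realization_construction {state input : Type*}
    (A : state → input → Prop) (GI : state → Prop)
    (GT : state → input → state → Prop) (s₀ : state)
    (hGI : GI s₀) (hV : Viable A GT s₀) :
    Realization (fun s => s = s₀) (fun s i s' => GT s i s' ∧ Viable A GT s')
      A GI GT := by
  refine ⟨fun s hs => hs ▸ hGI, fun s i s' ⟨_, _, h, _⟩ => h, ⟨s₀, rfl⟩, ?_⟩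
  rintro s i ⟨hr, hA⟩
  have hvs : Viable A GT s := by
    clear hA i
    induction hr with
    | init s hs => exact hs ▸ hV
    | step s_prev i s _ _ hT _ => exact hT.2
  obtain ⟨V, hVs, hstep⟩ := hvs
  obtain ⟨s', hGT, hVs'⟩ := hstep s hVs i hA
  exact ⟨s', hGT, V, hVs', hstep⟩
end

section
/- Soundness of the 'unrealizable' result: for a contract (A, (G_I, G_T)), if there exists n such that BaseCheck(n) fails, i.e. ¬(∃ s, G_I(s) ∧ Viable_n(s)), then the contract is not realizable. -/
/-- Soundness of the 'unrealizable' result: if some BaseCheck(n) fails,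
    the contract is not realizable. -/
theorem unrealizable_sound {state input : Type*}
    (A : state → input → Prop) (GI : state → Prop)
    (GT : state → input → state → Prop)
    (h : ∃ n, ¬ BaseCheck A GI GT n) :
    ¬ Realizable A GI GT := by
  obtain ⟨n, hn⟩ := h
  rintro ⟨I, T, hGI, hGT, ⟨s0, hI0⟩, htot⟩
  have key : ∀ n s, Reachable I T A s → ViableN A GT n s := by
    intro n
    induction n with
    | zero => intro s _; trivial
    | succ n ih =>
      intro s hs i hAi
      obtain ⟨s', hT⟩ := htot s i ⟨hs, hAi⟩
      exact ⟨s', hGT s i s' ⟨hs, hAi, hT⟩, ih s' (Reachable.step s i s' hs hAi hT)⟩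
  exact hn ⟨s0, hGI s0 hI0, key n s0 (Reachable.init s0 hI0)⟩
end

section
/- Shifting lemma: for a contract (A, (G_I, G_T)), for all states s, numbers n, and inputs i, if Extend_n(s), Viable_n(s), and A(s, i) hold, then there exists a state s' with G_T(s, i, s') and Viable_n(s'). -/
/-- Shifting lemma: Extend_n and Viable_n let us shift Viable_n forward. -/
theorem shifting_lemma {state input : Type*}
    (A : state → input → Prop) (GT : state → input → state → Prop) :
    ∀ (s : state) (n : ℕ) (i : input),
      ExtendN A GT n s → ViableN A GT n s → A s i →
      ∃ s', GT s i s' ∧ ViableN A GT n s' := by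
  intro s n
  induction n generalizing s with
  | zero =>
    intro i hE _ hA
    obtain ⟨s', hs'⟩ := hE i hA
    exact ⟨s', hs', trivial⟩
  | succ n ih =>
    intro i hE hV hA
    obtain ⟨s', hGT, hVn⟩ := hV i hA
    refine ⟨s', hGT, ?_⟩
    intro j hAj
    exact ih s' j (hE i s' ⟨hA, hGT⟩) hVn hAj
end

section
/- Coinduction lemma: for a contract (A, (G_I, G_T)), for all states s and numbers n, if Viable_n(s) holds and ExtendCheck(n) holds (i.e. every state satisfies Extend_n), then s is viable: Viable(s). -/
theorem extendN_viableN_succ {state input : Type*}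
    (A : state → input → Prop) (GT : state → input → state → Prop) :
    ∀ (n : ℕ) (s : state), ExtendN A GT n s → ViableN A GT n s →
      ViableN A GT (n + 1) s := by
  intro n
  induction n with
  | zero =>
    intro s he _ i hA
    obtain ⟨s', hGT⟩ := he i hA
    exact ⟨s', hGT, trivial⟩
  | succ n ih =>
    intro s he hv i hA
    obtain ⟨s', hGT, hv'⟩ := hv i hA
    exact ⟨s', hGT, ih s' (he i s' ⟨hA, hGT⟩) hv'⟩

/-- Coinduction lemma: if Viable_n(s) and ExtendCheck(n), then Viable(s). -/
theorem viableN_extendCheck_viable {state input : Type*}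
    (A : state → input → Prop) (GT : state → input → state → Prop) :
    ∀ (s : state) (n : ℕ), ViableN A GT n s → ExtendCheck A GT n →
      Viable A GT s := by
  intro s n hv hec
  exact ⟨ViableN A GT n, hv, fun x hx i hA => by
    obtain ⟨s', hGT, hv'⟩ := extendN_viableN_succ A GT n x (hec x) hx i hA
    exact ⟨s', hGT, hv'⟩⟩
end

section
/- Soundness of the 'realizable' result: for a contract (A, (G_I, G_T)), if there exists n such that both BaseCheck(n) and ExtendCheck(n) hold, then the contract is realizable. -/
lemma viableN_succ_of_extendN {state input : Type*} {A : state → input → Prop}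
    {GT : state → input → state → Prop} :
    ∀ n s, ExtendN A GT n s → ViableN A GT n s → ViableN A GT (n + 1) s := by
  intro n
  induction n with
  | zero =>
    intro s he _ i hA
    obtain ⟨s', hs'⟩ := he i hA
    exact ⟨s', hs', trivial⟩
  | succ n ih =>
    intro s he hv i hA
    obtain ⟨s', hGT, hv'⟩ := hv i hA
    exact ⟨s', hGT, ih s' (he i s' ⟨hA, hGT⟩) hv'⟩

/-- Soundness of the 'realizable' result: if BaseCheck(n) and ExtendCheck(n)
    both hold for some n, then the contract is realizable. -/
theorem realizable_sound {state input : Type*}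
    (A : state → input → Prop) (GI : state → Prop)
    (GT : state → input → state → Prop)
    (h : ∃ n, BaseCheck A GI GT n ∧ ExtendCheck A GT n) :
    Realizable A GI GT := by
  obtain ⟨n, ⟨s0, hGI0, hV0⟩, hext⟩ := h
  -- V := ViableN n is a post-fixed point
  have post : ∀ s, ViableN A GT n s → ∀ i, A s i →
      ∃ s', GT s i s' ∧ ViableN A GT n s' := by
    intro s hv i hA
    have hv1 := viableN_succ_of_extendN n s (hext s) hv
    obtain ⟨s', hGT, hv'⟩ := hv1 i hA
    exact ⟨s', hGT, hv'⟩
  refine ⟨fun s => GI s ∧ ViableN A GT n s,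
          fun s i s' => GT s i s' ∧ ViableN A GT n s', ?_, ?_, ?_, ?_⟩
  · exact fun s hs => hs.1
  · exact fun s i s' h => h.2.2.1
  · exact ⟨s0, hGI0, hV0⟩
  · intro s i ⟨hr, hA⟩
    have hvs : ViableN A GT n s := by
      induction hr with
      | init s hI => exact hI.2
      | step s_prev i s _ _ hT _ => exact hT.2
    obtain ⟨s', hGT, hv'⟩ := post s hvs i hA
    exact ⟨s', hGT, hv'⟩
end

section
/- One-way soundness of the simplified base check: for a contract (A, (G_I, G_T)), if there exists a state s with G_I(s), then for every n, if BaseCheck'(k) holds for all k ≤ n, then BaseCheck(n) holds. (Theorem on one-way soundness of the simplified base check) -/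

lemma extend_viable {state input : Type*} (A : state → input → Prop)
    (GT : state → input → state → Prop) :
    ∀ n s, (∀ k ≤ n, ExtendN A GT k s) → ViableN A GT n s := by
  intro n
  induction n with
  | zero => intro s _; trivial
  | succ n ih =>
    intro s h i hA
    obtain ⟨s', hs'⟩ := h 0 (Nat.zero_le _) i hA
    exact ⟨s', hs', ih s' (fun k hk => h (k+1) (Nat.succ_le_succ hk) i s' ⟨hA, hs'⟩)⟩

/-- One-way soundness of the simplified base check. -/
theorem baseCheck'_sound {state input : Type*}
    (A : state → input → Prop) (GI : state → Prop)
    (GT : state → input → state → Prop) :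
    (∃ s, GI s) →
    ∀ n, (∀ k ≤ n, BaseCheck' A GI GT k) → BaseCheck A GI GT n := by
  rintro ⟨s, hs⟩ n h
  exact ⟨s, hs, extend_viable A GT n s (fun k hk => h k hk s hs)⟩
end

section
/- Incompleteness example (realizable side), part 1: take state = ℤ and input any inhabited type, and consider the contract with A(s, i) := True, G_I(s) := True, and G_T(s, i, s') := (s ≠ 0). This contract is realizable; in particular, the transition system with I(s) := (s = 1) and T(s, i, s') := (s' = 1) is a realization of it. -/
/-- Incompleteness example (realizable side), part 1: the contract with
    A := True, GI := True, GT s i s' := (s ≠ 0) over integer states is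
    realizable; the system starting in state 1 and always transitioning to
    state 1 realizes it. -/
theorem example_realizable {input : Type*} [Inhabited input] :
    Realizable (fun (_ : ℤ) (_ : input) => True) (fun (_ : ℤ) => True)
      (fun (s : ℤ) (_ : input) (_ : ℤ) => s ≠ 0) ∧
    Realization (fun (s : ℤ) => s = 1)
      (fun (_ : ℤ) (_ : input) (s' : ℤ) => s' = 1)
      (fun (_ : ℤ) (_ : input) => True) (fun (_ : ℤ) => True)
      (fun (s : ℤ) (_ : input) (_ : ℤ) => s ≠ 0) := by
  have real : Realization (fun (s : ℤ) => s = 1)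
      (fun (_ : ℤ) (_ : input) (s' : ℤ) => s' = 1)
      (fun (_ : ℤ) (_ : input) => True) (fun (_ : ℤ) => True)
      (fun (s : ℤ) (_ : input) (_ : ℤ) => s ≠ 0) := by
    have hreach : ∀ s : ℤ, Reachable (fun (s : ℤ) => s = 1)
        (fun (_ : ℤ) (_ : input) (s' : ℤ) => s' = 1)
        (fun (_ : ℤ) (_ : input) => True) s → s = 1 := by
      intro s h
      induction h with
      | init s hs => exact hs
      | step _ _ _ _ _ ht => exact ht
    refine ⟨fun _ _ => trivial, ?_, ⟨1, rfl⟩, fun s i _ => ⟨1, rfl⟩⟩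
    intro s i s' ⟨hr, _, _⟩
    rw [hreach s hr]; decide
  exact ⟨⟨_, _, real⟩, real⟩
end

section
/- Incompleteness example (realizable side), part 2: take state = ℤ and input any inhabited type, and consider the contract with A(s, i) := True, G_I(s) := True, and G_T(s, i, s') := (s ≠ 0). For every n, ExtendCheck(n) fails, i.e. ¬(∀ s, Extend_n(s)). -/
/-- Incompleteness example (realizable side), part 2: for the contract with
    A := True, GI := True, GT s i s' := (s ≠ 0) over integer states,
    ExtendCheck(n) fails for every n. -/
theorem example_extendCheck_fails {input : Type*} [Inhabited input] :
    ∀ n : ℕ, ¬ ExtendCheck (fun (_ : ℤ) (_ : input) => True)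
      (fun (s : ℤ) (_ : input) (_ : ℤ) => s ≠ 0) n := by
  have key : ∀ n : ℕ, ∃ s : ℤ, ¬ ExtendN (fun (_ : ℤ) (_ : input) => True)
      (fun (s : ℤ) (_ : input) (_ : ℤ) => s ≠ 0) n s := by
    intro n
    induction n with
    | zero =>
      refine ⟨0, fun h => ?_⟩
      obtain ⟨s', hs'⟩ := h default trivial
      exact hs' rfl
    | succ n ih =>
      obtain ⟨s, hs⟩ := ih
      refine ⟨1, fun h => hs ?_⟩
      exact h default s ⟨trivial, one_ne_zero⟩
  intro n h
  obtain ⟨s, hs⟩ := key n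
  exact hs (h s)
end

section
/- Incompleteness example (unrealizable side), part 1: take state = ℤ and input any inhabited type, and consider the contract with A(s, i) := True, G_I(s) := (s ≥ 0), and G_T(s, i, s') := (s' = s - 1 ∧ s' ≥ 0). This contract is not realizable. -/
/-- Incompleteness example (unrealizable side), part 1: the contract with
    A := True, GI s := (s ≥ 0), GT s i s' := (s' = s - 1 ∧ s' ≥ 0) over
    integer states is not realizable. -/
theorem example_unrealizable {input : Type*} [Inhabited input] :
    ¬ Realizable (fun (_ : ℤ) (_ : input) => True) (fun (s : ℤ) => s ≥ 0)
      (fun (s : ℤ) (_ : input) (s' : ℤ) => s' = s - 1 ∧ s' ≥ 0) := by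
  rintro ⟨I, T, h1, h2, ⟨s₀, hs₀⟩, h4⟩
  have key : ∀ n : ℕ, ∃ s : ℤ, Reachable I T (fun _ _ => True) s ∧ s = s₀ - n := by
    intro n
    induction n with
    | zero => exact ⟨s₀, Reachable.init s₀ hs₀, by simp⟩
    | succ n ih =>
      obtain ⟨s, hr, hs⟩ := ih
      obtain ⟨s', hT⟩ := h4 s default ⟨hr, trivial⟩
      obtain ⟨he, _⟩ := h2 s default s' ⟨hr, trivial, hT⟩
      exact ⟨s', Reachable.step s default s' hr trivial hT, by push_cast; omega⟩
  obtain ⟨s, hr, hs⟩ := key (s₀ + 1).toNat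
  obtain ⟨s', hT⟩ := h4 s default ⟨hr, trivial⟩
  obtain ⟨he, hge⟩ := h2 s default s' ⟨hr, trivial, hT⟩
  omega
end

section
/- Incompleteness example (unrealizable side), part 2: take state = ℤ and input any inhabited type, and consider the contract with A(s, i) := True, G_I(s) := (s ≥ 0), and G_T(s, i, s') := (s' = s - 1 ∧ s' ≥ 0). For every n, BaseCheck(n) holds, i.e. ∃ s, G_I(s) ∧ Viable_n(s); in particular the state s = n witnesses it. -/
/-- Incompleteness example (unrealizable side), part 2: for the contract with
    A := True, GI s := (s ≥ 0), GT s i s' := (s' = s - 1 ∧ s' ≥ 0) over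
    integer states, BaseCheck(n) holds for every n, witnessed by s = n. -/
theorem example_baseCheck_holds {input : Type*} [Inhabited input] :
    ∀ n : ℕ, (fun s : ℤ => s ≥ 0) (n : ℤ) ∧
      ViableN (fun (_ : ℤ) (_ : input) => True)
        (fun (s : ℤ) (_ : input) (s' : ℤ) => s' = s - 1 ∧ s' ≥ 0) n (n : ℤ) ∧
      BaseCheck (fun (_ : ℤ) (_ : input) => True) (fun (s : ℤ) => s ≥ 0)
        (fun (s : ℤ) (_ : input) (s' : ℤ) => s' = s - 1 ∧ s' ≥ 0) n := by

  intro n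
  induction n with
  | zero => exact ⟨le_refl 0, trivial, ⟨0, le_refl 0, trivial⟩⟩
  | succ n ih =>
    have hv : ViableN (fun (_ : ℤ) (_ : input) => True)
        (fun (s : ℤ) (_ : input) (s' : ℤ) => s' = s - 1 ∧ s' ≥ 0) (n+1) ((n:ℤ)+1) := by
      intro i _
      refine ⟨(n : ℤ), ⟨by ring, Int.natCast_nonneg n⟩, ih.2.1⟩
    push_cast
    exact ⟨by positivity, hv, ⟨(n:ℤ)+1, by positivity, hv⟩⟩
end

section
/- Spurious failure of the simplified base check: take state = ℤ and input any inhabited type, and consider the contract with A(s, i) := True, G_I(s) := True, and G_T(s, i, s') := (s ≠ 0). For every n, BaseCheck'(n) fails, i.e. ¬(∀ s, G_I(s) → Extend_n(s)), even though the contract is realizable. -/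
/-- Spurious failure of the simplified base check: for the contract with
    A := True, GI := True, GT s i s' := (s ≠ 0) over integer states,
    BaseCheck'(n) fails for every n, even though the contract is realizable. -/
theorem example_baseCheck'_fails {input : Type*} [Inhabited input] :
    (∀ n : ℕ, ¬ BaseCheck' (fun (_ : ℤ) (_ : input) => True)
      (fun (_ : ℤ) => True) (fun (s : ℤ) (_ : input) (_ : ℤ) => s ≠ 0) n) ∧
    Realizable (fun (_ : ℤ) (_ : input) => True) (fun (_ : ℤ) => True)
      (fun (s : ℤ) (_ : input) (_ : ℤ) => s ≠ 0) := by
  constructor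
  · have key : ∀ n : ℕ, ¬ ExtendN (fun (_ : ℤ) (_ : input) => True)
        (fun (s : ℤ) (_ : input) (_ : ℤ) => s ≠ 0) (n + 1) 1 := by
      intro n
      induction n with
      | zero =>
        intro h
        obtain ⟨_, hs⟩ := h default 0 ⟨trivial, one_ne_zero⟩ default trivial
        exact hs rfl
      | succ n ih =>
        intro h
        exact ih (h default 1 ⟨trivial, one_ne_zero⟩)
    intro n hbc
    cases n with
    | zero =>
      obtain ⟨_, hs⟩ := hbc 0 trivial default trivial
      exact hs rfl
    | succ n => exact key n (hbc 1 trivial)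
  · refine ⟨fun s => s = 1, fun _ _ s' => s' = 1, fun _ _ => trivial, ?_, ⟨1, rfl⟩, ?_⟩
    · intro s i s' ⟨hr, _, _⟩
      have : s = 1 := by
        induction hr with
        | init s h => exact h
        | step s_prev i s _ _ ht => exact ht
      simp [this]
    · exact fun s i _ => ⟨1, rfl⟩
end
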